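/- Let n ≥ 1, S ≥ 0, and for each c ∈ {1,…,n} let v_c ∈ ℝ, s_c ∈ ℝ, m_c ≥ 0 and p_c > 0. Let N be the output function of a feed-forward ReLU network all of whose weights are nonnegative. Define A = { Σ_{c=1}^n (v_c X_c − p_c(θ_c − X_c)) : X ∈ ℕ^n, Σ_c s_c X_c ≤ S, X_c ≤ m_c for all c, and for each c there exists σ^c satisfying the relaxed (ReLU+) constraints at input X_c with θ_c = Σ_j W^{out}_j σ^c_{I,j} + B^{out} } and B = { Σ_{c=1}^n (v_c X_c − p_c(N(X_c) − X_c)) : X ∈ ℕ^n, Σ_c s_c X_c ≤ S, X_c ≤ m_c for all c }. Then sup A = sup B; in particular, the ReLU+ knapsack model has the same optimal value as the model in which each θ_c is replaced by the exact network output N(X_c). -/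

import Mathlib

/-- A feed-forward ReLU network with one real input and one real output:
`I ≥ 1` hidden layers, layer sizes `J 1, …, J I`, layer-1 weights `W1` and
biases `B1`, deeper-layer weights `W i k j` (from node `k` of layer `i-1` to
node `j` of layer `i`, for `2 ≤ i ≤ I`) and biases `B i j`, output weights
`Wout` and output bias `Bout`. -/
structure ReLUNet where
  I : ℕ
  hI : 1 ≤ I
  J : ℕ → ℕ
  W1 : ℕ → ℝ
  B1 : ℕ → ℝ
  W : ℕ → ℕ → ℕ → ℝ
  B : ℕ → ℕ → ℝ
  Wout : ℕ → ℝ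
  Bout : ℝ

/-- The value `v_{i,j}(x)` of hidden node `j` of layer `i` at input `x`. -/
def ReLUNet.node (net : ReLUNet) (x : ℝ) : ℕ → ℕ → ℝ
  | 0, _ => 0
  | 1, j => max 0 (net.W1 j * x + net.B1 j)
  | i + 2, j =>
      max 0 ((∑ k ∈ Finset.range (net.J (i + 1)),
        net.W (i + 2) k j * net.node x (i + 1) k) + net.B (i + 2) j)

/-- The output `N(x)` of the network at input `x`. -/
def ReLUNet.output (net : ReLUNet) (x : ℝ) : ℝ :=
  (∑ j ∈ Finset.range (net.J net.I), net.Wout j * net.node x net.I j) + net.Bout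

/-- The relaxed (ReLU+) constraints at input `x` on `σ`. -/
def ReLUNet.Relaxed (net : ReLUNet) (x : ℝ) (σ : ℕ → ℕ → ℝ) : Prop :=
  (∀ i j, 1 ≤ i → i ≤ net.I → j < net.J i → 0 ≤ σ i j) ∧
  (∀ j, j < net.J 1 → net.W1 j * x + net.B1 j ≤ σ 1 j) ∧
  (∀ i j, 2 ≤ i → i ≤ net.I → j < net.J i →
    (∑ k ∈ Finset.range (net.J (i - 1)), net.W i k j * σ (i - 1) k) + net.B i j ≤ σ i j)

/-- All weights of the network are nonnegative. -/
def ReLUNet.NonnegWeights (net : ReLUNet) : Prop :=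
  (∀ j, j < net.J 1 → 0 ≤ net.W1 j) ∧
  (∀ i k j, 2 ≤ i → i ≤ net.I → k < net.J (i - 1) → j < net.J i → 0 ≤ net.W i k j) ∧
  (∀ j, j < net.J net.I → 0 ≤ net.Wout j)

lemma relaxed_node (net : ReLUNet) (x : ℝ) : net.Relaxed x (net.node x) := by
  refine ⟨?_, ?_, ?_⟩
  · intro i j h1 _ _
    match i, h1 with
    | 1, _ => exact le_max_left _ _
    | (i+2), _ => exact le_max_left _ _
  · intro j _
    simp only [ReLUNet.node]
    exact le_max_right _ _
  · intro i j h2 _ _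
    match i, h2 with
    | (i+2), _ =>
      simp only [ReLUNet.node]
      exact le_max_right _ _

lemma node_le_relaxed (net : ReLUNet) (hw : net.NonnegWeights) (x : ℝ)
    (σ : ℕ → ℕ → ℝ) (h : net.Relaxed x σ) :
    ∀ i, 1 ≤ i → i ≤ net.I → ∀ j, j < net.J i → net.node x i j ≤ σ i j := by
  intro i
  induction i using Nat.strong_induction_on with
  | _ i ih =>
    intro h1 hiI j hj
    match i, h1 with
    | 1, _ =>
      simp only [ReLUNet.node]
      exact max_le (h.1 1 j le_rfl hiI hj) (h.2.1 j hj)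
    | (i+2), _ =>
      simp only [ReLUNet.node]
      refine max_le (h.1 _ j (by omega) hiI hj) ?_
      have hrel := h.2.2 (i+2) j (by omega) hiI hj
      refine le_trans ?_ hrel
      have h21 : (i+2) - 1 = i + 1 := rfl
      rw [h21]
      refine add_le_add (Finset.sum_le_sum ?_) le_rfl
      intro k hk
      rw [Finset.mem_range] at hk
      exact mul_le_mul_of_nonneg_left
        (ih (i+1) (by omega) (by omega) (by omega) k hk)
        (hw.2.1 (i+2) k j (by omega) hiI hk hj)

lemma output_le (net : ReLUNet) (hw : net.NonnegWeights) (x : ℝ)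
    (σ : ℕ → ℕ → ℝ) (h : net.Relaxed x σ) :
    net.output x ≤ (∑ j ∈ Finset.range (net.J net.I), net.Wout j * σ net.I j) + net.Bout := by
  unfold ReLUNet.output
  refine add_le_add (Finset.sum_le_sum ?_) le_rfl
  intro j hj
  rw [Finset.mem_range] at hj
  exact mul_le_mul_of_nonneg_left
    (node_le_relaxed net hw x σ h net.I net.hI le_rfl j hj)
    (hw.2.2 j hj)

/-- The ReLU+ knapsack model has the same optimal value as the model in which
each embedded output `θ_c` is replaced by the exact network output `N(X_c)`. -/
theorem knapsack_reluplus_same_value (net : ReLUNet) (hw : net.NonnegWeights)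
    (n : ℕ) (hn : 1 ≤ n) (S : ℝ) (hS : S ≥ 0) (v s m p : ℕ → ℝ)
    (hm : ∀ c, 1 ≤ c → c ≤ n → m c ≥ 0) (hp : ∀ c, 1 ≤ c → c ≤ n → p c > 0) :
    sSup {val : ℝ | ∃ X : ℕ → ℕ, ∃ θ : ℕ → ℝ,
        (∑ c ∈ Finset.Icc 1 n, s c * (X c : ℝ)) ≤ S ∧
        (∀ c, 1 ≤ c → c ≤ n → (X c : ℝ) ≤ m c) ∧
        (∀ c, 1 ≤ c → c ≤ n → ∃ σ : ℕ → ℕ → ℝ, net.Relaxed (X c : ℝ) σ ∧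
          θ c = (∑ j ∈ Finset.range (net.J net.I), net.Wout j * σ net.I j) + net.Bout) ∧
        val = ∑ c ∈ Finset.Icc 1 n, (v c * (X c : ℝ) - p c * (θ c - (X c : ℝ)))} =
    sSup {val : ℝ | ∃ X : ℕ → ℕ,
        (∑ c ∈ Finset.Icc 1 n, s c * (X c : ℝ)) ≤ S ∧
        (∀ c, 1 ≤ c → c ≤ n → (X c : ℝ) ≤ m c) ∧
        val = ∑ c ∈ Finset.Icc 1 n,
          (v c * (X c : ℝ) - p c * (net.output (X c : ℝ) - (X c : ℝ)))} := by
  set A := {val : ℝ | ∃ X : ℕ → ℕ, ∃ θ : ℕ → ℝ,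
        (∑ c ∈ Finset.Icc 1 n, s c * (X c : ℝ)) ≤ S ∧
        (∀ c, 1 ≤ c → c ≤ n → (X c : ℝ) ≤ m c) ∧
        (∀ c, 1 ≤ c → c ≤ n → ∃ σ : ℕ → ℕ → ℝ, net.Relaxed (X c : ℝ) σ ∧
          θ c = (∑ j ∈ Finset.range (net.J net.I), net.Wout j * σ net.I j) + net.Bout) ∧
        val = ∑ c ∈ Finset.Icc 1 n, (v c * (X c : ℝ) - p c * (θ c - (X c : ℝ)))} with hA
  set Bs := {val : ℝ | ∃ X : ℕ → ℕ,
        (∑ c ∈ Finset.Icc 1 n, s c * (X c : ℝ)) ≤ S ∧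
        (∀ c, 1 ≤ c → c ≤ n → (X c : ℝ) ≤ m c) ∧
        val = ∑ c ∈ Finset.Icc 1 n,
          (v c * (X c : ℝ) - p c * (net.output (X c : ℝ) - (X c : ℝ)))} with hB
  -- B ⊆ A
  have hsub : Bs ⊆ A := by
    rintro b ⟨X, h1, h2, h3⟩
    exact ⟨X, fun c => net.output (X c : ℝ), h1, h2,
      fun c hc1 hc2 => ⟨net.node (X c : ℝ), relaxed_node net _, rfl⟩, h3⟩
  -- every element of A is ≤ some element of B
  have hdom : ∀ a ∈ A, ∃ b ∈ Bs, a ≤ b := by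
    rintro a ⟨X, θ, h1, h2, h3, h4⟩
    refine ⟨∑ c ∈ Finset.Icc 1 n,
      (v c * (X c : ℝ) - p c * (net.output (X c : ℝ) - (X c : ℝ))), ⟨X, h1, h2, rfl⟩, ?_⟩
    rw [h4]
    refine Finset.sum_le_sum ?_
    intro c hc
    rw [Finset.mem_Icc] at hc
    obtain ⟨σ, hσ, hθ⟩ := h3 c hc.1 hc.2
    have hout : net.output (X c : ℝ) ≤ θ c := hθ ▸ output_le net hw _ σ hσ
    have hpc := hp c hc.1 hc.2
    nlinarith [hpc, hout]
  -- bound on B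
  set b0 : ℝ := ∑ c ∈ Finset.Icc 1 n,
    (Finset.range (⌊m c⌋₊ + 1)).sup' ⟨0, Finset.mem_range.mpr (Nat.succ_pos _)⟩ (fun t : ℕ =>
      v c * (t : ℝ) - p c * (net.output (t : ℝ) - (t : ℝ))) with hb0
  have hBbdd : ∀ b ∈ Bs, b ≤ b0 := by
    rintro b ⟨X, h1, h2, h3⟩
    rw [h3, hb0]
    refine Finset.sum_le_sum ?_
    intro c hc
    rw [Finset.mem_Icc] at hc
    have hXc : X c ∈ Finset.range (⌊m c⌋₊ + 1) := by
      rw [Finset.mem_range, Nat.lt_succ_iff]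
      exact Nat.le_floor (h2 c hc.1 hc.2)
    exact Finset.le_sup' (fun t : ℕ => v c * (t : ℝ) - p c * (net.output (t : ℝ) - (t : ℝ))) hXc
  have hBbdd' : BddAbove Bs := ⟨b0, hBbdd⟩
  have hAbdd' : BddAbove A := by
    refine ⟨b0, fun a ha => ?_⟩
    obtain ⟨b, hb, hab⟩ := hdom a ha
    exact hab.trans (hBbdd b hb)
  -- nonemptiness
  have hBne : Bs.Nonempty := by
    refine ⟨_, fun _ => 0, ?_, ?_, rfl⟩
    · simp [hS]
    · intro c hc1 hc2; simpa using hm c hc1 hc2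
  have hAne : A.Nonempty := hBne.mono hsub
  refine le_antisymm ?_ (csSup_le_csSup hAbdd' hBne hsub)
  refine csSup_le hAne ?_
  intro a ha
  obtain ⟨b, hb, hab⟩ := hdom a ha
  exact hab.trans (le_csSup hBbdd' hb)
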